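/- arXiv:1510.06079 — 3 statements merged into one kernel-verified Lean document; each statement's English description precedes it below -/
import Mathlib

section
/- Let 0 < ε ≤ x₀ and let t : [−ε, ε] → ℝ be differentiable. Then for every x ∈ [−ε, ε], the derivative of the curve x ↦ W(x, t(x)) satisfies d/dx W(x, t(x)) = (1 − 2t(x)·φ''(x))·√(1 + φ'(x)²)·τ₂(x) + t'(x)·(1 + φ'(x)²)·τ₁(x). -/
/-- `τ₁(x) = (−2φ'(x), 1 − φ'(x)²)/(1 + φ'(x)²)`. -/
noncomputable def tau1 (φ' : ℝ → ℝ) (x : ℝ) : ℝ × ℝ :=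
  (1 / (1 + (φ' x) ^ 2)) • (-2 * φ' x, 1 - (φ' x) ^ 2)

/-- `τ₂(x) = (1, φ'(x))/√(1 + φ'(x)²)`. -/
noncomputable def tau2 (φ' : ℝ → ℝ) (x : ℝ) : ℝ × ℝ :=
  (1 / Real.sqrt (1 + (φ' x) ^ 2)) • (1, φ' x)

/-- `W(x,t) = (x, φ(x)) + t·(−2φ'(x), 1 − φ'(x)²)`. -/
noncomputable def Wmap (φ φ' : ℝ → ℝ) (x t : ℝ) : ℝ × ℝ :=
  (x, φ x) + t • (-2 * φ' x, 1 - (φ' x) ^ 2)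

/-- For a differentiable `t : [−ε, ε] → ℝ`,
`d/dx W(x, t(x)) = (1 − 2t(x)φ''(x))·√(1 + φ'(x)²)·τ₂(x) + t'(x)·(1 + φ'(x)²)·τ₁(x)`. -/
theorem derivative_of_reflecting_curve (x₀ ε : ℝ) (hx₀ : 0 < x₀) (hε : 0 < ε)
    (hεx₀ : ε ≤ x₀) (φ φ' φ'' t t' : ℝ → ℝ)
    (hφ : ∀ x ∈ Set.Icc (-x₀) x₀, HasDerivAt φ (φ' x) x)
    (hφ' : ∀ x ∈ Set.Icc (-x₀) x₀, HasDerivAt φ' (φ'' x) x)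
    (hφ''c : ContinuousOn φ'' (Set.Icc (-x₀) x₀))
    (ht : ∀ x ∈ Set.Icc (-ε) ε, HasDerivAt t (t' x) x) :
    ∀ x ∈ Set.Icc (-ε) ε,
      HasDerivAt (fun s => Wmap φ φ' s (t s))
        (((1 - 2 * t x * φ'' x) * Real.sqrt (1 + (φ' x) ^ 2)) • tau2 φ' x
          + (t' x * (1 + (φ' x) ^ 2)) • tau1 φ' x) x := by
  intro x hx
  have hx' : x ∈ Set.Icc (-x₀) x₀ := by
    constructor
    · linarith [hx.1]
    · linarith [hx.2]
  have h1 : HasDerivAt (fun s => (s, φ s) : ℝ → ℝ × ℝ) (1, φ' x) x :=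
    (hasDerivAt_id x).prodMk (hφ x hx')
  have hv : HasDerivAt (fun s => (-2 * φ' s, 1 - (φ' s) ^ 2) : ℝ → ℝ × ℝ)
      (-2 * φ'' x, -(2 * φ' x * φ'' x)) x := by
    refine HasDerivAt.prodMk ?_ ?_
    · simpa using (hφ' x hx').const_mul (-2)
    · have := ((hφ' x hx').pow 2).const_sub 1
      simpa [mul_comm, mul_assoc, mul_left_comm] using this
  have h2 : HasDerivAt (fun s => t s • (-2 * φ' s, 1 - (φ' s) ^ 2) : ℝ → ℝ × ℝ)
      (t' x • (-2 * φ' x, 1 - (φ' x) ^ 2) + t x • (-2 * φ'' x, -(2 * φ' x * φ'' x))) x := by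
    have := (ht x hx).smul hv
    rw [add_comm] at this
    exact this
  have h3 := h1.add h2
  have heq : ((1 - 2 * t x * φ'' x) * Real.sqrt (1 + (φ' x) ^ 2)) • tau2 φ' x
      + (t' x * (1 + (φ' x) ^ 2)) • tau1 φ' x
      = (1, φ' x) + (t' x • (-2 * φ' x, 1 - (φ' x) ^ 2)
          + t x • (-2 * φ'' x, -(2 * φ' x * φ'' x))) := by
    have hpos : (0:ℝ) < 1 + (φ' x) ^ 2 := by positivity
    have hs : Real.sqrt (1 + (φ' x) ^ 2) * (1 / Real.sqrt (1 + (φ' x) ^ 2)) = 1 := by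
      rw [mul_one_div, div_self (Real.sqrt_ne_zero'.mpr hpos)]
    unfold tau1 tau2
    ext <;> simp [Prod.smul_mk, smul_eq_mul] <;> field_simp <;> nlinarith [hs, hpos]
  rw [heq]
  simpa [Wmap, Pi.add_def] using h3
end

section
/- Let constants 0 < c₁ < c₀ < c and 0 < ε ≤ x₀ be such that for all x ∈ [−ε, ε]: (i) φ''(0)/(1 + c₁ε) < φ''(x) < φ''(0)·(1 + c₁ε); (ii) 0 < (1 + a(x))/(1 + b(x)) < 2; (iii) √(1 + φ'(x)²) < 2·√(1 + φ'(0)²); and (iv) 8·ε·φ''(0)·(2c + c²ε) < c₀ − c₁. Let l ∈ [c₀, c] and let t : [−ε, ε] → ℝ be a differentiable solution of t'(x) = ((1 + a(x))/(1 + b(x)))·(1 − 2φ''(x)·t(x))/√(1 + φ'(x)²) with initial condition t(−ε) = (1 + lε)/(2φ''(0)). Then 1 − 2φ''(x)·t(x) < 0 for all x ∈ [−ε, ε]. -/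
set_option maxHeartbeats 1600000 in
/-- Under the quantitative hypotheses (i)–(iv), the solution of the ODE with initial value
`t(−ε) = (1 + lε)/(2φ''(0))`, `l ∈ [c₀, c]`, stays strictly beyond the caustic:
`1 − 2φ''(x)t(x) < 0` on `[−ε, ε]`. -/
theorem solution_stays_beyond_caustic (x₀ ε c c₀ c₁ l : ℝ) (hx₀ : 0 < x₀) (hε : 0 < ε)
    (hεx₀ : ε ≤ x₀) (hc₁ : 0 < c₁) (hc₁c₀ : c₁ < c₀) (hc₀c : c₀ < c)
    (φ φ' φ'' φ''' a b t : ℝ → ℝ)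
    (hφ : ∀ x ∈ Set.Icc (-x₀) x₀, HasDerivAt φ (φ' x) x)
    (hφ' : ∀ x ∈ Set.Icc (-x₀) x₀, HasDerivAt φ' (φ'' x) x)
    (hφ'' : ∀ x ∈ Set.Icc (-x₀) x₀, HasDerivAt φ'' (φ''' x) x)
    (hφ'''c : ContinuousOn φ''' (Set.Icc (-x₀) x₀))
    (hconv : ∀ x ∈ Set.Icc (-x₀) x₀, 0 < φ'' x)
    (hab : ∀ x ∈ Set.Icc (-x₀) x₀,
      tau2 φ' 0 = a x • tau1 φ' x + (1 + b x) • tau2 φ' x)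
    (hi : ∀ x ∈ Set.Icc (-ε) ε,
      φ'' 0 / (1 + c₁ * ε) < φ'' x ∧ φ'' x < φ'' 0 * (1 + c₁ * ε))
    (hii : ∀ x ∈ Set.Icc (-ε) ε,
      0 < (1 + a x) / (1 + b x) ∧ (1 + a x) / (1 + b x) < 2)
    (hiii : ∀ x ∈ Set.Icc (-ε) ε,
      Real.sqrt (1 + (φ' x) ^ 2) < 2 * Real.sqrt (1 + (φ' 0) ^ 2))
    (hiv : 8 * ε * φ'' 0 * (2 * c + c ^ 2 * ε) < c₀ - c₁)
    (hl : l ∈ Set.Icc c₀ c)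
    (hode : ∀ x ∈ Set.Icc (-ε) ε,
      HasDerivAt t
        (((1 + a x) / (1 + b x)) * (1 - 2 * φ'' x * t x) / Real.sqrt (1 + (φ' x) ^ 2)) x)
    (hinit : t (-ε) = (1 + l * ε) / (2 * φ'' 0)) :
    ∀ x ∈ Set.Icc (-ε) ε, 1 - 2 * φ'' x * t x < 0 := by
  have hc : 0 < c := lt_trans (lt_trans hc₁ hc₁c₀) hc₀c
  have h0mem : (0:ℝ) ∈ Set.Icc (-x₀) x₀ := by constructor <;> linarith
  have hφ''0 : 0 < φ'' 0 := hconv 0 h0mem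
  have h1c₁ε : 0 < 1 + c₁ * ε := by nlinarith
  set B : ℝ := (1 + c₁ * ε) / (2 * φ'' 0) with hBdef
  have hBpos : 0 < B := by positivity
  set E : ℝ := ε * (2 * c + c ^ 2 * ε) with hEdef
  have hEpos : 0 < E := by positivity
  set M : ℝ := 2 * E with hMdef
  have hMpos : 0 < M := by rw [hMdef]; linarith
  -- sqrt facts
  have hs1 : ∀ x : ℝ, 1 ≤ Real.sqrt (1 + (φ' x) ^ 2) := by
    intro x
    have h := Real.sqrt_le_sqrt (show (1:ℝ) ≤ 1 + (φ' x) ^ 2 by nlinarith [sq_nonneg (φ' x)])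
    simpa using h
  -- u < 0 wherever t x > B
  have hucond : ∀ x ∈ Set.Icc (-ε) ε, B < t x → 1 - 2 * φ'' x * t x < 0 := by
    intro x hx htx
    have h1 := (hi x hx).1
    have hφpos : 0 < φ'' 0 / (1 + c₁ * ε) := by positivity
    have hBval : 2 * (φ'' 0 / (1 + c₁ * ε)) * B = 1 := by
      rw [hBdef]; field_simp
    nlinarith [mul_lt_mul'' h1 htx hφpos.le hBpos.le]
  -- initial value above barrier
  have hinitB : B < t (-ε) := by
    rw [hinit, hBdef]
    gcongr
    nlinarith [hl.1]
  have hsubε : Set.Icc (-ε) ε ⊆ Set.Icc (-x₀) x₀ :=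
    Set.Icc_subset_Icc (by linarith) hεx₀
  -- main claim : t stays above the barrier B
  have key : ∀ x ∈ Set.Icc (-ε) ε, B < t x := by
    by_contra hcon
    push_neg at hcon
    obtain ⟨z, hz, hzB⟩ := hcon
    have tcont : ContinuousOn t (Set.Icc (-ε) ε) :=
      fun x hx => (hode x hx).continuousAt.continuousWithinAt
    have hSclosed : IsClosed (Set.Icc (-ε) ε ∩ t ⁻¹' Set.Iic B) :=
      tcont.preimage_isClosed_of_isClosed isClosed_Icc isClosed_Iic
    have hScomp : IsCompact (Set.Icc (-ε) ε ∩ t ⁻¹' Set.Iic B) :=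
      IsCompact.of_isClosed_subset isCompact_Icc hSclosed Set.inter_subset_left
    obtain ⟨m, hmS, hmlb⟩ := hScomp.exists_isLeast ⟨z, hz, hzB⟩
    obtain ⟨hmIcc, hmB'⟩ := hmS
    have hmB : t m ≤ B := hmB'
    have hmne : -ε < m := by
      rcases lt_or_eq_of_le hmIcc.1 with h | h
      · exact h
      · rw [← h] at hmB; linarith
    have hsubm : Set.Icc (-ε) m ⊆ Set.Icc (-ε) ε := Set.Icc_subset_Icc le_rfl hmIcc.2
    have hbefore : ∀ y ∈ Set.Ico (-ε) m, B < t y := by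
      intro y hy
      by_contra hyB
      push_neg at hyB
      exact absurd (hmlb ⟨⟨hy.1, hy.2.le.trans hmIcc.2⟩, hyB⟩) (not_le.mpr hy.2)
    have hanti : AntitoneOn t (Set.Icc (-ε) m) := by
      apply antitoneOn_of_deriv_nonpos (convex_Icc _ _) (tcont.mono hsubm)
      · intro y hy
        rw [interior_Icc] at hy
        exact ((hode y (hsubm (Set.Ioo_subset_Icc_self hy))).differentiableAt).differentiableWithinAt
      · intro y hy
        rw [interior_Icc] at hy
        have hyIcc : y ∈ Set.Icc (-ε) ε := hsubm (Set.Ioo_subset_Icc_self hy)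
        rw [(hode y hyIcc).deriv]
        have hu : 1 - 2 * φ'' y * t y < 0 := hucond y hyIcc (hbefore y ⟨hy.1.le, hy.2⟩)
        have hr := (hii y hyIcc).1
        have hs := hs1 y
        apply div_nonpos_of_nonpos_of_nonneg
        · nlinarith
        · linarith
    have hbound : ∀ y ∈ Set.Ico (-ε) m,
        ‖((1 + a y) / (1 + b y)) * (1 - 2 * φ'' y * t y) / Real.sqrt (1 + (φ' y) ^ 2)‖ ≤ M := by
      intro y hy
      have hyIcc : y ∈ Set.Icc (-ε) ε := hsubm (Set.Ico_subset_Icc_self hy)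
      have hty : t y ≤ t (-ε) :=
        hanti (Set.left_mem_Icc.mpr hmIcc.1) ⟨hy.1, hy.2.le⟩ hy.1
      have htB : B < t y := hbefore y hy
      have hu : 1 - 2 * φ'' y * t y < 0 := hucond y hyIcc htB
      have h2 := (hi y hyIcc).2
      have htpos : 0 < t y := hBpos.trans htB
      have htinit2 : 2 * φ'' 0 * t (-ε) = 1 + l * ε := by
        rw [hinit]; field_simp
      have hul : -E ≤ 1 - 2 * φ'' y * t y := by
        have hstep : 2 * φ'' y * t y ≤ 2 * (φ'' 0 * (1 + c₁ * ε)) * t (-ε) := by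
          nlinarith [mul_le_mul h2.le hty htpos.le (by positivity : (0:ℝ) ≤ φ'' 0 * (1 + c₁ * ε))]
        have hprod : 2 * (φ'' 0 * (1 + c₁ * ε)) * t (-ε) = (1 + c₁ * ε) * (1 + l * ε) := by
          rw [hinit]; field_simp
        rw [hprod] at hstep
        have hc₁ε : c₁ * ε ≤ c * ε := by nlinarith
        have hlε : l * ε ≤ c * ε := by nlinarith [hl.2]
        have hclsq : c₁ * l * (ε * ε) ≤ c * c * (ε * ε) := by
          have : c₁ * l ≤ c * c := mul_le_mul (by linarith) hl.2 (by linarith [hl.1]) hc.le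
          nlinarith [mul_nonneg hε.le hε.le]
        rw [hEdef]
        nlinarith
      have hr := (hii y hyIcc).1
      have hr2 := (hii y hyIcc).2
      have hs := hs1 y
      have hs0 : (0:ℝ) < Real.sqrt (1 + (φ' y) ^ 2) := lt_of_lt_of_le one_pos hs
      rw [Real.norm_eq_abs, abs_le]
      constructor
      · rw [neg_le, ← neg_div, div_le_iff₀ hs0]
        have hEM : (1 + a y) / (1 + b y) * -(1 - 2 * φ'' y * t y) ≤ 2 * E :=
          mul_le_mul hr2.le (by linarith) (by linarith) (by norm_num)
        have hMs : M ≤ M * Real.sqrt (1 + (φ' y) ^ 2) := le_mul_of_one_le_right hMpos.le hs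
        rw [hMdef] at hMs ⊢
        nlinarith
      · have hnum : (1 + a y) / (1 + b y) * (1 - 2 * φ'' y * t y) ≤ 0 :=
          mul_nonpos_of_nonneg_of_nonpos hr.le hu.le
        have : (1 + a y) / (1 + b y) * (1 - 2 * φ'' y * t y) / Real.sqrt (1 + (φ' y) ^ 2) ≤ 0 :=
          div_nonpos_of_nonpos_of_nonneg hnum hs0.le
        linarith
    have hderivW : ∀ y ∈ Set.Icc (-ε) m,
        HasDerivWithinAt t
          (((1 + a y) / (1 + b y)) * (1 - 2 * φ'' y * t y) / Real.sqrt (1 + (φ' y) ^ 2))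
          (Set.Icc (-ε) m) y :=
      fun y hy => (hode y (hsubm hy)).hasDerivWithinAt
    have hmvt := norm_image_sub_le_of_norm_deriv_le_segment' hderivW hbound m
      (Set.right_mem_Icc.mpr hmIcc.1)
    rw [Real.norm_eq_abs, abs_le] at hmvt
    have hdrop : t (-ε) - t m ≤ M * (m - (-ε)) := by linarith [hmvt.1]
    have hB2 : 2 * φ'' 0 * B = 1 + c₁ * ε := by rw [hBdef]; field_simp
    have htinit2 : 2 * φ'' 0 * t (-ε) = 1 + l * ε := by rw [hinit]; field_simp
    have hmε : m ≤ ε := hmIcc.2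
    have hMpos : 0 < M := by rw [hMdef]; positivity
    -- multiply the drop estimate by 2 φ'' 0 and derive a contradiction with (iv)
    have h1 : t (-ε) - t m ≤ M * (2 * ε) := by
      have := mul_le_mul_of_nonneg_left (show m - (-ε) ≤ 2 * ε by linarith) hMpos.le
      linarith
    have h2 : t (-ε) - B ≤ M * (2 * ε) := by linarith
    have h3 : 2 * φ'' 0 * (t (-ε) - B) ≤ 2 * φ'' 0 * (M * (2 * ε)) :=
      mul_le_mul_of_nonneg_left h2 (by positivity)
    rw [mul_sub, htinit2, hB2] at h3
    rw [hMdef, hEdef] at h3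
    nlinarith [mul_lt_mul_of_pos_left hiv hε, mul_le_mul_of_nonneg_left hl.1 hε.le]
  intro x hx
  exact hucond x hx (key x hx)
end

section
/- Let r > 0 and φ(x) = −√(r² − x²) for x ∈ (−r, r) (the lower semicircle of the circle x² + y² = r²). For x ∈ (−r, r), let P = (x, φ(x)), let τ₁(x) = (−2φ'(x), 1 − φ'(x)²)/(1 + φ'(x)²) be the direction of the ray obtained by reflecting a downward vertical ray at P, and let L_x(1) = P + (1/(2φ''(x)))·(−2φ'(x), 1 − φ'(x)²) be the caustic tangency point. Then: (i) the second endpoint of the chord of the circle through P in direction τ₁(x) is Q = P − 2⟨P, τ₁(x)⟩·τ₁(x), and ‖Q − P‖ = 2√(r² − x²); (ii) ‖L_x(1) − P‖ = √(r² − x²)/2. Hence the tangency point divides the chord of the reflected ray in the ratio 1 : 3 measured from the point of reflection. -/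
/-- The standard inner product on `ℝ × ℝ`. -/
def dot2 (u v : ℝ × ℝ) : ℝ := u.1 * v.1 + u.2 * v.2

/-- The Euclidean norm on `ℝ × ℝ`. -/
noncomputable def euclNorm (u : ℝ × ℝ) : ℝ := Real.sqrt (u.1 ^ 2 + u.2 ^ 2)

lemma semicircle_hasDerivAt (r : ℝ) {y : ℝ} (hy : r ^ 2 - y ^ 2 ≠ 0) :
    HasDerivAt (fun y => -Real.sqrt (r ^ 2 - y ^ 2)) (y / Real.sqrt (r ^ 2 - y ^ 2)) y := by
  have h1 : HasDerivAt (fun y : ℝ => r ^ 2 - y ^ 2) (-(2 * y)) y := by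
    simpa using ((hasDerivAt_pow 2 y).const_sub (r ^ 2))
  have h2 := ((Real.hasDerivAt_sqrt hy).comp y h1).neg
  refine h2.congr_deriv ?_
  ring

lemma semicircle_deriv (r : ℝ) {y : ℝ} (hy : r ^ 2 - y ^ 2 ≠ 0)
    (φ : ℝ → ℝ) (hφ : ∀ y, φ y = -Real.sqrt (r ^ 2 - y ^ 2)) :
    deriv φ y = y / Real.sqrt (r ^ 2 - y ^ 2) := by
  have : φ = fun y => -Real.sqrt (r ^ 2 - y ^ 2) := funext hφ
  rw [this]
  exact (semicircle_hasDerivAt r hy).deriv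

/-- For the lower semicircle `φ(x) = −√(r² − x²)`: the second endpoint of the chord through
`P = (x, φ(x))` in the reflected direction `τ₁(x)` is `Q = P − 2⟨P, τ₁(x)⟩·τ₁(x)` (a point
of the circle), the chord has length `2√(r² − x²)`, and the caustic tangency point `L_x(1)`
is at distance `√(r² − x²)/2` from `P`, i.e. the tangency point divides the chord in the
ratio `1 : 3` from the point of reflection. -/
theorem chord_divided_one_to_three (r x : ℝ) (hr : 0 < r) (hx : x ∈ Set.Ioo (-r) r)
    (φ : ℝ → ℝ) (hφ : ∀ y, φ y = -Real.sqrt (r ^ 2 - y ^ 2))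
    (P Q : ℝ × ℝ) (hP : P = (x, φ x))
    (hQ : Q = P - (2 * dot2 P (tau1 (deriv φ) x)) • tau1 (deriv φ) x) :
    dot2 Q Q = r ^ 2 ∧
    euclNorm (Q - P) = 2 * Real.sqrt (r ^ 2 - x ^ 2) ∧
    euclNorm ((1 / (2 * deriv (deriv φ) x))
        • (-2 * deriv φ x, 1 - (deriv φ x) ^ 2)) = Real.sqrt (r ^ 2 - x ^ 2) / 2 := by
  obtain ⟨hx1, hx2⟩ := hx
  have hu : 0 < r ^ 2 - x ^ 2 := by nlinarith
  obtain ⟨s, hsdef⟩ : ∃ s : ℝ, s = Real.sqrt (r ^ 2 - x ^ 2) := ⟨_, rfl⟩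
  have hs0 : 0 < s := hsdef ▸ Real.sqrt_pos.mpr hu
  have hs2 : s ^ 2 = r ^ 2 - x ^ 2 := by rw [hsdef]; exact Real.sq_sqrt hu.le
  have hrr : (0:ℝ) < r ^ 2 := by positivity
  -- first derivative
  have hd1 : deriv φ x = x / s := by
    rw [semicircle_deriv r hu.ne' φ hφ, hsdef]
  -- second derivative
  have hopen : Set.Ioo (-r) r ∈ nhds x := (isOpen_Ioo).mem_nhds ⟨hx1, hx2⟩
  have heq : deriv φ =ᶠ[nhds x] fun y => y / Real.sqrt (r ^ 2 - y ^ 2) := by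
    filter_upwards [hopen] with y hy
    have hy' : 0 < r ^ 2 - y ^ 2 := by
      obtain ⟨h1, h2⟩ := hy; nlinarith
    exact semicircle_deriv r hy'.ne' φ hφ
  have hg : HasDerivAt (fun y => y / Real.sqrt (r ^ 2 - y ^ 2)) (r ^ 2 / (s ^ 3)) x := by
    have h1 : HasDerivAt (fun y : ℝ => r ^ 2 - y ^ 2) (-(2 * x)) x := by
      simpa using ((hasDerivAt_pow 2 x).const_sub (r ^ 2))
    have hsq := (Real.hasDerivAt_sqrt hu.ne').comp x h1
    have hne : ((fun x => Real.sqrt x) ∘ fun y => r ^ 2 - y ^ 2) x ≠ 0 := by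
      simpa using (hsdef ▸ hs0.ne' : Real.sqrt (r ^ 2 - x ^ 2) ≠ 0)
    have h2 := (hasDerivAt_id x).div hsq hne
    refine h2.congr_deriv ?_
    simp only [Function.comp_apply, id_eq, ← hsdef]
    field_simp
    linear_combination hs2
  have hd2 : deriv (deriv φ) x = r ^ 2 / s ^ 3 := by
    rw [heq.deriv_eq]
    exact hg.deriv
  have hφx : φ x = -s := by rw [hφ x, hsdef]
  have htau : tau1 (deriv φ) x = (-2 * x * s / r ^ 2, (s ^ 2 - x ^ 2) / r ^ 2) := by
    rw [tau1, hd1]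
    have h1 : 1 + (x / s) ^ 2 = r ^ 2 / s ^ 2 := by
      field_simp; linarith
    rw [h1, Prod.smul_mk, smul_eq_mul, smul_eq_mul, Prod.mk.injEq]
    constructor <;> field_simp <;> ring
  have hdot : dot2 P (tau1 (deriv φ) x) = -s := by
    rw [hP, htau, hφx, dot2]
    simp only
    field_simp
    linear_combination (-1) * hs2
  rw [hQ, hdot, htau, hP, hφx]
  have hQval : ((x, -s) : ℝ × ℝ) - (2 * -s) • ((-2 * x * s / r ^ 2, (s ^ 2 - x ^ 2) / r ^ 2) : ℝ × ℝ)
      = (x - 4 * x * s ^ 2 / r ^ 2, -s + 2 * s * (s ^ 2 - x ^ 2) / r ^ 2) := by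
    rw [Prod.smul_mk, smul_eq_mul, smul_eq_mul, Prod.mk_sub_mk, Prod.mk.injEq]
    constructor <;> ring
  rw [hQval]
  refine ⟨?_, ?_, ?_⟩
  · rw [dot2]
    simp only
    field_simp
    linear_combination (r^4 + 4*s^2*x^2 + 4*s^4) * hs2
  · rw [euclNorm]
    simp only [Prod.mk_sub_mk]
    have key : (x - 4 * x * s ^ 2 / r ^ 2 - x) ^ 2 + (-s + 2 * s * (s ^ 2 - x ^ 2) / r ^ 2 - -s) ^ 2
        = (2 * s) ^ 2 := by
      field_simp
      linear_combination (4*s^2*r^2 + 4*s^2*x^2 + 4*s^4) * hs2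
    rw [key, Real.sqrt_sq (by positivity), hsdef]
  · rw [euclNorm, hd1, hd2]
    simp only [Prod.smul_mk, smul_eq_mul]
    have key : (1 / (2 * (r ^ 2 / s ^ 3)) * (-2 * (x / s))) ^ 2
        + (1 / (2 * (r ^ 2 / s ^ 3)) * (1 - (x / s) ^ 2)) ^ 2 = (s / 2) ^ 2 := by
      field_simp
      linear_combination (s^2 + x^2 + r^2) * hs2
    rw [key, Real.sqrt_sq (by positivity), hsdef]
end
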